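/- The maximum number of regions into which d hyperplanes (each through arbitrary positions) can partition ℝ^k is C(d,k) = binom(d,0) + binom(d,1) + ... + binom(d,k). In particular C(d,k) ≤ d^k + 1. -/

import Mathlib

open scoped RealInnerProductSpace

open Finset Set Polynomial

set_option maxHeartbeats 1000000

namespace Stmt1Aux

theorem pascal_sum (m n : ℕ) :
    ∑ j ∈ range (n + 1), (m + 1).choose j
      = ∑ j ∈ range (n + 1), m.choose j + ∑ j ∈ range n, m.choose j := by
  rw [Finset.sum_range_succ' (fun j => (m+1).choose j) n]
  simp only [Nat.choose_succ_succ, Nat.succ_eq_add_one]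
  rw [Finset.sum_add_distrib, Nat.choose_zero_right]
  rw [Finset.sum_range_succ' (fun j => m.choose j) n]
  simp only [Nat.choose_zero_right]
  ring

theorem sum_choose_le (d k : ℕ) (hk : 0 < k) :
    ∑ j ∈ range (k + 1), d.choose j ≤ d ^ k + 1 := by
  induction k with
  | zero => omega
  | succ k ih =>
    rcases Nat.eq_zero_or_pos k with hk0 | hk0
    · subst hk0
      simp [Finset.sum_range_succ]
      rcases Nat.eq_zero_or_pos d with h | h
      · simp [h]
      · omega
    · have ih' := ih hk0
      rw [Finset.sum_range_succ]
      have key : d ^ k + d.choose (k+1) ≤ d ^ (k+1) := by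
        rcases Nat.eq_zero_or_pos d with h | h
        · subst h
          simp [Nat.choose_eq_zero_of_lt, Nat.zero_pow hk0, Nat.zero_pow (show 0 < k+1 by omega)]
        · have h1 : d.choose (k+1) ≤ d.choose k * (d - k) := by
            calc d.choose (k+1) ≤ d.choose (k+1) * (k+1) := Nat.le_mul_of_pos_right _ (by omega)
              _ = d.choose k * (d - k) := Nat.choose_succ_right_eq d k
          have h2 : d.choose k * (d - k) ≤ d ^ k * (d - 1) :=
            Nat.mul_le_mul (Nat.choose_le_pow d k) (by omega)
          have hd : d - 1 + 1 = d := by omega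
          calc d ^ k + d.choose (k+1) ≤ d ^ k + d ^ k * (d-1) := by omega
            _ = d ^ k * (d - 1 + 1) := by rw [Nat.mul_succ]; omega
            _ = d ^ k * d := by rw [hd]
            _ = d ^ (k+1) := by ring
      omega

-- L2: number of subsets of Fin d with card ≤ k
open Classical in
theorem card_small_subsets (d k : ℕ) :
    Nat.card {R : Finset (Fin d) // R.card ≤ k} = ∑ j ∈ range (k + 1), d.choose j := by
  rw [Nat.card_eq_fintype_card, Fintype.card_subtype]
  have : (univ.filter (fun R : Finset (Fin d) => R.card ≤ k))
      = (range (k+1)).biUnion (fun j => Finset.powersetCard j (univ : Finset (Fin d))) := by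
    ext R
    simp [Finset.mem_powersetCard, Nat.lt_succ_iff]
  rw [this, Finset.card_biUnion]
  · exact Finset.sum_congr rfl fun j _ => by
      rw [Finset.card_powersetCard, Finset.card_univ, Fintype.card_fin]
  · intro a _ b _ hab
    simp only [Finset.disjoint_left, Finset.mem_powersetCard]
    rintro R ⟨-, h1⟩ ⟨-, h2⟩
    exact hab (h1 ▸ h2 ▸ rfl)

-- sign vector of a root set
def sgnOf (d : ℕ) (R : Finset (Fin d)) : Fin d → Bool :=
  fun i => decide (Even (R.filter (fun r => i ≤ r)).card)

-- L3: injectivity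
theorem sgnOf_injective (d : ℕ) : Function.Injective (sgnOf d) := by
  intro R S h
  by_contra hne
  have hsd : (symmDiff R S).Nonempty := Finset.symmDiff_nonempty.mpr hne
  obtain ⟨i, hi, hmax⟩ := Finset.exists_max_image (symmDiff R S) id hsd
  -- elements above i agree
  have hagree : ∀ r, i < r → (r ∈ R ↔ r ∈ S) := by
    intro r hr
    by_contra hcon
    have : r ∈ symmDiff R S := by
      rw [Finset.mem_symmDiff]; tauto
    exact absurd (hmax r this) (by simpa using hr)
  have hgt : R.filter (fun r => i < r) = S.filter (fun r => i < r) := by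
    ext r; simp only [Finset.mem_filter]
    constructor
    · rintro ⟨h1, h2⟩; exact ⟨(hagree r h2).mp h1, h2⟩
    · rintro ⟨h1, h2⟩; exact ⟨(hagree r h2).mpr h1, h2⟩
  -- i is in exactly one of R, S; wlog i ∈ R, i ∉ S
  have key : ∀ (A : Finset (Fin d)), (A.filter (fun r => i ≤ r))
      = if i ∈ A then insert i (A.filter (fun r => i < r)) else A.filter (fun r => i < r) := by
    intro A
    split_ifs with hiA
    · ext r
      simp only [Finset.mem_insert, Finset.mem_filter]
      constructor
      · rintro ⟨h1, h2⟩
        rcases eq_or_lt_of_le h2 with h3 | h3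
        · left; exact h3.symm
        · right; exact ⟨h1, h3⟩
      · rintro (rfl | ⟨h1, h2⟩)
        · exact ⟨hiA, le_refl _⟩
        · exact ⟨h1, le_of_lt h2⟩
    · ext r
      simp only [Finset.mem_filter]
      constructor
      · rintro ⟨h1, h2⟩
        rcases eq_or_lt_of_le h2 with h3 | h3
        · exact absurd (h3 ▸ h1) hiA
        · exact ⟨h1, h3⟩
      · rintro ⟨h1, h2⟩; exact ⟨h1, le_of_lt h2⟩
  have hiRS : (i ∈ R ∧ i ∉ S) ∨ (i ∈ S ∧ i ∉ R) := by
    have := hi; rw [Finset.mem_symmDiff] at this; tauto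
  have hfun := congrFun h i
  unfold sgnOf at hfun
  rw [decide_eq_decide] at hfun
  rw [key R, key S, hgt] at hfun
  rcases hiRS with ⟨h1, h2⟩ | ⟨h1, h2⟩ <;>
    [rw [if_pos h1, if_neg h2] at hfun; rw [if_neg h2, if_pos h1] at hfun] <;>
  · rw [Finset.card_insert_of_notMem (by simp)] at hfun
    rw [Nat.even_add_one] at hfun
    first
      | exact iff_not_self hfun.symm
      | exact iff_not_self hfun

-- L1
theorem prod_sign {α : Type*} (s : Finset α) (f : α → ℝ) (h : ∀ a ∈ s, f a ≠ 0) :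
    (Even (s.filter (fun a => f a < 0)).card → 0 < ∏ a ∈ s, f a) ∧
    (¬ Even (s.filter (fun a => f a < 0)).card → (∏ a ∈ s, f a) < 0) := by
  classical
  have hsplit := Finset.prod_filter_mul_prod_filter_not s (fun a => f a < 0) f
  have hpos : 0 < ∏ a ∈ s.filter (fun a => ¬ f a < 0), f a := by
    apply Finset.prod_pos
    intro a ha
    rw [Finset.mem_filter] at ha
    exact lt_of_le_of_ne (not_lt.mp ha.2) (Ne.symm (h a ha.1))
  have hneg : ∏ a ∈ s.filter (fun a => f a < 0), f a
      = (-1) ^ (s.filter (fun a => f a < 0)).card * ∏ a ∈ s.filter (fun a => f a < 0), (-(f a)) := by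
    rw [← Finset.prod_const, ← Finset.prod_mul_distrib]
    exact Finset.prod_congr rfl fun a _ => by ring
  have hnegpos : 0 < ∏ a ∈ s.filter (fun a => f a < 0), (-(f a)) := by
    apply Finset.prod_pos
    intro a ha
    rw [Finset.mem_filter] at ha
    linarith [ha.2]
  constructor
  · intro he
    rw [← hsplit, hneg, he.neg_one_pow, one_mul]
    exact mul_pos hnegpos hpos
  · intro ho
    rw [Nat.not_even_iff_odd] at ho
    rw [← hsplit, hneg, ho.neg_one_pow]
    nlinarith [mul_pos hnegpos hpos]

-- L4
theorem realize (k d : ℕ) (R : Finset (Fin d)) (hR : R.card ≤ k) :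
    ∃ x : Fin k → ℝ, ∀ i : Fin d,
      if sgnOf d R i then 0 < (∑ j : Fin k, x j * ((i:ℕ):ℝ)^(j:ℕ)) + ((i:ℕ):ℝ)^k
      else (∑ j : Fin k, x j * ((i:ℕ):ℝ)^(j:ℕ)) + ((i:ℕ):ℝ)^k < 0 := by
  classical
  set p : ℝ[X] := (∏ r ∈ R, (X - C (((r:ℕ):ℝ) + 1/2))) * (X + 1) ^ (k - R.card) with hp
  have hmon1 : (∏ r ∈ R, (X - C (((r:ℕ):ℝ) + 1/2))).Monic :=
    monic_prod_of_monic _ _ (fun r _ => monic_X_sub_C _)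
  have hmon2 : ((X + 1 : ℝ[X]) ^ (k - R.card)).Monic := by
    have h1 : (X + 1 : ℝ[X]) = X + C 1 := by simp
    rw [h1]; exact (monic_X_add_C (1:ℝ)).pow _
  have hmon : p.Monic := hmon1.mul hmon2
  have hdeg1 : (∏ r ∈ R, (X - C (((r:ℕ):ℝ) + 1/2))).natDegree = R.card := by
    rw [Polynomial.natDegree_prod _ _ (fun r _ => X_sub_C_ne_zero _)]
    calc ∑ r ∈ R, (X - C (((r:ℕ):ℝ) + 1/2)).natDegree
        = ∑ _r ∈ R, 1 :=
          Finset.sum_congr rfl (fun (r : Fin d) _ => Polynomial.natDegree_X_sub_C _)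
      _ = R.card := by simp
  have hdeg2 : ((X + 1 : ℝ[X]) ^ (k - R.card)).natDegree = k - R.card := by
    have h1 : (X + 1 : ℝ[X]) = X + C 1 := by simp
    rw [h1, Polynomial.natDegree_pow, Polynomial.natDegree_X_add_C, mul_one]
  have hdeg : p.natDegree = k := by
    rw [hp, hmon1.natDegree_mul hmon2, hdeg1, hdeg2]
    omega
  have hck : p.coeff k = 1 := by rw [← hdeg]; exact hmon.coeff_natDegree
  refine ⟨fun j => p.coeff (j:ℕ), fun i => ?_⟩
  set g : Fin d → ℝ := fun r => ((i:ℕ):ℝ) - (((r:ℕ):ℝ) + 1/2) with hg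
  have heval : (∑ j : Fin k, p.coeff (j:ℕ) * ((i:ℕ):ℝ)^(j:ℕ)) + ((i:ℕ):ℝ)^k
      = p.eval ((i:ℕ):ℝ) := by
    rw [Polynomial.eval_eq_sum_range, hdeg, Finset.sum_range_succ, hck, one_mul,
      Fin.sum_univ_eq_sum_range (fun j => p.coeff j * ((i:ℕ):ℝ)^j) k]
  have hprod : p.eval ((i:ℕ):ℝ)
      = (∏ r ∈ R, g r) * (((i:ℕ):ℝ) + 1) ^ (k - R.card) := by
    simp [hp, hg, Polynomial.eval_prod]
  have hfac2 : 0 < (((i:ℕ):ℝ) + 1) ^ (k - R.card) := by positivity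
  have hne : ∀ r ∈ R, g r ≠ 0 := by
    intro r _ h0
    rw [hg] at h0
    have h1 : ((i:ℕ):ℝ) = ((r:ℕ):ℝ) + 1/2 := by dsimp at h0; linarith
    rcases le_or_gt (i:ℕ) (r:ℕ) with h | h
    · have : ((i:ℕ):ℝ) ≤ ((r:ℕ):ℝ) := by exact_mod_cast h
      linarith
    · have : ((r:ℕ):ℝ) + 1 ≤ ((i:ℕ):ℝ) := by exact_mod_cast h
      linarith
  have hfilter : R.filter (fun r => g r < 0) = R.filter (fun r => i ≤ r) := by
    apply Finset.filter_congr
    intro r _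
    simp only [hg, decide_eq_true_eq]
    constructor
    · intro h
      rw [Fin.le_def]
      by_contra hc
      push_neg at hc
      have : ((r:ℕ):ℝ) + 1 ≤ ((i:ℕ):ℝ) := by exact_mod_cast hc
      linarith
    · intro h
      rw [Fin.le_def] at h
      have : ((i:ℕ):ℝ) ≤ ((r:ℕ):ℝ) := by exact_mod_cast h
      linarith
  have hsign := prod_sign R g hne
  rw [hfilter] at hsign
  unfold sgnOf
  by_cases hev : Even (R.filter (fun r => i ≤ r)).card
  · rw [if_pos (by simpa using hev)]
    rw [heval, hprod]
    exact mul_pos (hsign.1 hev) hfac2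
  · rw [if_neg (by simpa using hev)]
    rw [heval, hprod]
    exact mul_neg_of_neg_of_pos (hsign.2 hev) hfac2

theorem ub (m : ℕ) : ∀ (V : Type) [AddCommGroup V] [Module ℝ V] [FiniteDimensional ℝ V]
    (f : Fin m → (V →ᵃ[ℝ] ℝ)),
    Nat.card {s : Fin m → Bool // ∃ x : V, ∀ i, if s i then 0 < f i x else f i x < 0}
      ≤ ∑ j ∈ range (Module.finrank ℝ V + 1), m.choose j := by
  induction m with
  | zero =>
    intro V _ _ _ f
    calc Nat.card {s : Fin 0 → Bool // ∃ x : V, ∀ i, if s i then 0 < f i x else f i x < 0}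
        ≤ Nat.card (Fin 0 → Bool) := Nat.card_le_card_of_injective _ Subtype.val_injective
      _ = 1 := by simp [Nat.card_eq_fintype_card]
      _ ≤ ∑ j ∈ range (Module.finrank ℝ V + 1), Nat.choose 0 j := by
          have h0 : (0:ℕ) ∈ range (Module.finrank ℝ V + 1) := by simp
          have := Finset.single_le_sum (f := fun j => Nat.choose 0 j)
            (fun i _ => Nat.zero_le _) h0
          simpa using this
  | succ m IH =>
    intro V _ _ _ f
    classical
    set n := Module.finrank ℝ V with hn
    set P : (Fin (m+1) → Bool) → Prop :=
      fun s => ∃ x : V, ∀ i, if s i then 0 < f i x else f i x < 0 with hP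
    set f' : Fin m → (V →ᵃ[ℝ] ℝ) := fun i => f i.castSucc with hf'
    set P' : (Fin m → Bool) → Prop :=
      fun s => ∃ x : V, ∀ i, if s i then 0 < f' i x else f' i x < 0 with hP'
    set T : Finset (Fin (m+1) → Bool) := univ.filter P with hT
    set T' : Finset (Fin m → Bool) := univ.filter P' with hT'
    set B : Finset (Fin m → Bool) :=
      T'.filter (fun s' => Fin.snoc s' true ∈ T ∧ Fin.snoc s' false ∈ T) with hB
    have hcard : Nat.card {s : Fin (m+1) → Bool // P s} = T.card := by
      rw [Nat.card_eq_fintype_card, Fintype.card_subtype]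
    have hinit : ∀ s, s ∈ T → Fin.init s ∈ T' := by
      intro s hs
      rw [hT, Finset.mem_filter] at hs
      obtain ⟨-, x, hx⟩ := hs
      rw [hT', Finset.mem_filter]
      exact ⟨Finset.mem_univ _, x, fun i => hx i.castSucc⟩
    -- T covered by fibers over T'
    have hcover : T ⊆ T'.biUnion (fun s' => T.filter (fun s => Fin.init s = s')) := by
      intro s hs
      rw [Finset.mem_biUnion]
      exact ⟨Fin.init s, hinit s hs, Finset.mem_filter.mpr ⟨hs, rfl⟩⟩
    have hfiber : ∀ s' ∈ T', (T.filter (fun s => Fin.init s = s')).card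
        ≤ if (Fin.snoc s' true ∈ T ∧ Fin.snoc s' false ∈ T) then 2 else 1 := by
      intro s' _
      have hsub : T.filter (fun s => Fin.init s = s')
          ⊆ {Fin.snoc s' true, Fin.snoc s' false} := by
        intro s hs
        rw [Finset.mem_filter] at hs
        obtain ⟨hsT, hss'⟩ := hs
        have hs2 : s = Fin.snoc s' (s (Fin.last m)) := by
          rw [← hss']; exact (Fin.snoc_init_self s).symm
        rcases Bool.eq_false_or_eq_true (s (Fin.last m)) with hb | hb <;>
          rw [hb] at hs2 <;> simp [hs2]
      split_ifs with hboth
      · calc _ ≤ ({Fin.snoc s' true, Fin.snoc s' false} : Finset _).card :=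
            Finset.card_le_card hsub
          _ ≤ 2 := Finset.card_insert_le _ _ |>.trans (by simp)
      · rw [not_and_or] at hboth
        have hsub1 : ∀ (b : Bool), Fin.snoc s' b ∉ T →
            T.filter (fun s => Fin.init s = s') ⊆ {Fin.snoc s' (!b)} := by
          intro b hb s hs
          rw [Finset.mem_filter] at hs
          obtain ⟨hsT, hss'⟩ := hs
          have hs2 : s = Fin.snoc s' (s (Fin.last m)) := by
            rw [← hss']; exact (Fin.snoc_init_self s).symm
          have : s (Fin.last m) ≠ b := by
            intro hbb
            rw [hbb] at hs2
            exact hb (hs2 ▸ hsT)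
          have : s (Fin.last m) = !b := Bool.eq_not_of_ne this
          rw [this] at hs2
          simp [hs2]
        rcases hboth with hb | hb
        · calc _ ≤ ({Fin.snoc s' (!true)} : Finset _).card :=
              Finset.card_le_card (hsub1 true hb)
            _ = 1 := Finset.card_singleton _
        · calc _ ≤ ({Fin.snoc s' (!false)} : Finset _).card :=
              Finset.card_le_card (hsub1 false hb)
            _ = 1 := Finset.card_singleton _
    have hTbound : T.card ≤ T'.card + B.card := by
      calc T.card ≤ (T'.biUnion (fun s' => T.filter (fun s => Fin.init s = s'))).card :=
            Finset.card_le_card hcover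
        _ ≤ ∑ s' ∈ T', (T.filter (fun s => Fin.init s = s')).card :=
            Finset.card_biUnion_le
        _ ≤ ∑ s' ∈ T', (if (Fin.snoc s' true ∈ T ∧ Fin.snoc s' false ∈ T) then 2 else 1) :=
            Finset.sum_le_sum hfiber
        _ = ∑ s' ∈ T', ((if (Fin.snoc s' true ∈ T ∧ Fin.snoc s' false ∈ T) then 1 else 0) + 1) := by
            apply Finset.sum_congr rfl; intro s' _; split_ifs <;> rfl
        _ = T'.card + B.card := by
            rw [Finset.sum_add_distrib, Finset.sum_boole, Finset.sum_const, smul_eq_mul, mul_one]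
            push_cast
            rw [hB]
            ring
    have hT'bound : T'.card ≤ ∑ j ∈ range (n + 1), m.choose j := by
      have := IH V f'
      rwa [Nat.card_eq_fintype_card, Fintype.card_subtype] at this
    rw [hcard]
    by_cases hBne : B.Nonempty
    · -- extract hyperplane data
      obtain ⟨s₀, hs₀B⟩ := hBne
      set ℓ : V →ᵃ[ℝ] ℝ := f (Fin.last m) with hℓ
      have hsign : ∀ s' ∈ B, ∃ xp xq : V,
          (∀ i : Fin m, if s' i then 0 < f' i xp else f' i xp < 0) ∧
          (∀ i : Fin m, if s' i then 0 < f' i xq else f' i xq < 0) ∧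
          0 < ℓ xp ∧ ℓ xq < 0 := by
        intro s' hs'
        rw [hB, Finset.mem_filter] at hs'
        obtain ⟨-, ht, hf⟩ := hs'
        rw [hT, Finset.mem_filter] at ht hf
        obtain ⟨-, xp, hxp⟩ := ht
        obtain ⟨-, xq, hxq⟩ := hf
        refine ⟨xp, xq, fun i => ?_, fun i => ?_, ?_, ?_⟩
        · have := hxp i.castSucc
          rwa [Fin.snoc_castSucc] at this
        · have := hxq i.castSucc
          rwa [Fin.snoc_castSucc] at this
        · have := hxp (Fin.last m)
          rwa [Fin.snoc_last, if_pos rfl] at this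
        · have := hxq (Fin.last m)
          rwa [Fin.snoc_last, if_neg (by simp)] at this
      -- ℓ has nonzero linear part
      have hlin : ℓ.linear ≠ 0 := by
        obtain ⟨xp, xq, -, -, hp, hm⟩ := hsign s₀ hs₀B
        intro h0
        have : ℓ xp - ℓ xq = ℓ.linear (xp - xq) := by
          have := ℓ.linearMap_vsub xp xq
          simpa using this.symm
        rw [h0] at this
        simp at this
        linarith
      obtain ⟨v, hv⟩ : ∃ v, ℓ.linear v ≠ 0 := by
        by_contra hc
        push_neg at hc
        exact hlin (LinearMap.ext fun v => by simpa using hc v)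
      -- a point on the hyperplane
      obtain ⟨x₀, hx₀⟩ : ∃ x₀ : V, ℓ x₀ = 0 := by
        obtain ⟨xp, xq, -, -, hp, -⟩ := hsign s₀ hs₀B
        refine ⟨xp - (ℓ xp / ℓ.linear v) • v, ?_⟩
        have h1 : ℓ (xp - (ℓ xp / ℓ.linear v) • v) - ℓ xp
            = ℓ.linear ((xp - (ℓ xp / ℓ.linear v) • v) - xp) := by
          have := ℓ.linearMap_vsub (xp - (ℓ xp / ℓ.linear v) • v) xp
          simpa using this.symm
        have h2 : ((xp - (ℓ xp / ℓ.linear v) • v) - xp) = -((ℓ xp / ℓ.linear v) • v) := by abel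
        rw [h2] at h1
        rw [map_neg, map_smul] at h1
        rw [smul_eq_mul, div_mul_cancel₀ _ hv] at h1
        linarith
      set W := LinearMap.ker ℓ.linear with hW
      -- parametrization of the hyperplane
      set φ : ↥W →ᵃ[ℝ] V :=
        { toFun := fun w => x₀ + (w : V)
          linear := W.subtype
          map_vadd' := by
            intro p w
            simp [add_comm, add_assoc, add_left_comm] } with hφ
      set g : Fin m → (↥W →ᵃ[ℝ] ℝ) := fun i => (f' i).comp φ with hg
      have hBg : ∀ s' ∈ B, ∃ w : ↥W, ∀ i, if s' i then 0 < g i w else g i w < 0 := by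
        intro s' hs'
        obtain ⟨xp, xq, hxp, hxm, hp, hm⟩ := hsign s' hs'
        set a := ℓ xp with ha
        set c := ℓ xq with hc
        set t : ℝ := a / (a - c) with htdef
        have hac : 0 < a - c := by linarith
        have ht0 : 0 < t := by positivity
        have ht1 : t < 1 := by rw [htdef, div_lt_one hac]; linarith
        set y := AffineMap.lineMap xp xq t with hy
        have hty : ∀ (F : V →ᵃ[ℝ] ℝ), F y = (1 - t) * F xp + t * F xq := by
          intro F
          rw [hy, AffineMap.apply_lineMap, AffineMap.lineMap_apply]
          simp [vsub_eq_sub, vadd_eq_add]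
          ring
        have hℓy : ℓ y = 0 := by
          rw [hty ℓ, ← ha, ← hc, htdef]
          field_simp
          ring
        have hymem : y - x₀ ∈ W := by
          rw [hW, LinearMap.mem_ker]
          have h1 : ℓ y - ℓ x₀ = ℓ.linear (y - x₀) := by
            have := ℓ.linearMap_vsub y x₀
            simpa using this.symm
          rw [hℓy, hx₀] at h1
          linarith [h1]
        refine ⟨⟨y - x₀, hymem⟩, fun i => ?_⟩
        have hgi : g i ⟨y - x₀, hymem⟩ = f' i y := by
          rw [hg]
          simp only [AffineMap.comp_apply]
          congr 1
          show x₀ + (y - x₀) = y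
          abel
        rw [hgi, hty (f' i)]
        have hip := hxp i
        have him := hxm i
        by_cases hb : s' i = true
        · rw [if_pos hb]
          rw [if_pos hb] at hip him
          nlinarith
        · rw [if_neg hb]
          rw [if_neg hb] at hip him
          nlinarith
      -- bound B via IH on W
      have hBbound : B.card ≤ ∑ j ∈ range (Module.finrank ℝ ↥W + 1), m.choose j := by
        have hsub : B ⊆ univ.filter
            (fun s' : Fin m → Bool => ∃ w : ↥W, ∀ i, if s' i then 0 < g i w else g i w < 0) := by
          intro s' hs'
          rw [Finset.mem_filter]
          exact ⟨Finset.mem_univ _, hBg s' hs'⟩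
        have h2 := IH ↥W g
        rw [Nat.card_eq_fintype_card, Fintype.card_subtype] at h2
        exact le_trans (Finset.card_le_card hsub) h2
      -- finrank of W
      have hfr : Module.finrank ℝ ↥W + 1 = n := by
        have h1 := LinearMap.finrank_range_add_finrank_ker ℓ.linear
        have h2 : Module.finrank ℝ ↥(LinearMap.range ℓ.linear) = 1 := by
          apply le_antisymm
          · exact le_trans (Submodule.finrank_le _) (le_of_eq (Module.finrank_self ℝ))
          · rw [Nat.one_le_iff_ne_zero]
            intro h0
            have : (0 : ℕ) < Module.finrank ℝ ↥(LinearMap.range ℓ.linear) := by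
              rw [Module.finrank_pos_iff]
              exact nontrivial_of_ne ⟨ℓ.linear v, LinearMap.mem_range_self _ v⟩ 0
                (fun hcon => hv (by simpa using congrArg Subtype.val hcon))
            omega
        rw [h2] at h1
        rw [← hW] at h1
        omega
      calc T.card ≤ T'.card + B.card := hTbound
        _ ≤ (∑ j ∈ range (n + 1), m.choose j) + ∑ j ∈ range (Module.finrank ℝ ↥W + 1), m.choose j :=
            Nat.add_le_add hT'bound hBbound
        _ = (∑ j ∈ range (n + 1), m.choose j) + ∑ j ∈ range n, m.choose j := by rw [hfr]
        _ = ∑ j ∈ range (n + 1), (m+1).choose j := (pascal_sum m n).symm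
    · -- B empty
      rw [Finset.not_nonempty_iff_eq_empty] at hBne
      calc T.card ≤ T'.card + B.card := hTbound
        _ = T'.card := by rw [hBne]; simp
        _ ≤ ∑ j ∈ range (n + 1), m.choose j := hT'bound
        _ ≤ ∑ j ∈ range (n + 1), (m+1).choose j :=
            Finset.sum_le_sum (fun j _ => Nat.choose_le_choose j (Nat.le_succ m))

theorem bridge (k d : ℕ) (w : Fin d → EuclideanSpace ℝ (Fin k)) (b : Fin d → ℝ) :
    Nat.card (ConnectedComponents
      ↥((⋃ i, {x : EuclideanSpace ℝ (Fin k) | ⟪w i, x⟫ = b i})ᶜ)) =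
    Nat.card {s : Fin d → Bool // ∃ x : EuclideanSpace ℝ (Fin k),
      ∀ i, if s i then b i < ⟪w i, x⟫ else ⟪w i, x⟫ < b i} := by
  classical
  set S : Set (EuclideanSpace ℝ (Fin k)) := (⋃ i, {x : EuclideanSpace ℝ (Fin k) | ⟪w i, x⟫ = b i})ᶜ with hS
  set cell : (Fin d → Bool) → Set (EuclideanSpace ℝ (Fin k)) :=
    fun s => {x | ∀ i, if s i then b i < ⟪w i, x⟫ else ⟪w i, x⟫ < b i} with hcell
  have hlinmap : ∀ i : Fin d, IsLinearMap ℝ (fun x : EuclideanSpace ℝ (Fin k) => ⟪w i, x⟫) := by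
    intro i
    exact ⟨fun x y => inner_add_right _ _ _, fun c x => real_inner_smul_right _ _ _⟩
  have hcont : ∀ i : Fin d, Continuous (fun x : EuclideanSpace ℝ (Fin k) => ⟪w i, x⟫) :=
    fun i => continuous_const.inner continuous_id
  have hcellS : ∀ s, cell s ⊆ S := by
    intro s x hx
    rw [hS, Set.mem_compl_iff, Set.mem_iUnion]
    rintro ⟨i, hi⟩
    have := hx i
    rw [Set.mem_setOf_eq] at hi
    split_ifs at this <;> [exact absurd hi (by linarith); exact absurd hi (by linarith)]
  have hconv : ∀ s, Convex ℝ (cell s) := by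
    intro s
    have : cell s = ⋂ i, (if s i then {x : EuclideanSpace ℝ (Fin k) | b i < ⟪w i, x⟫} else {x : EuclideanSpace ℝ (Fin k) | ⟪w i, x⟫ < b i}) := by
      ext x
      simp only [hcell, Set.mem_setOf_eq, Set.mem_iInter]
      constructor
      · intro h i; have := h i; split_ifs at this ⊢ <;> simpa using this
      · intro h i; have := h i; split_ifs at this ⊢ <;> simpa using this
    rw [this]
    apply convex_iInter
    intro i
    split_ifs
    · exact convex_halfSpace_gt (hlinmap i) (b i)
    · exact convex_halfSpace_lt (hlinmap i) (b i)
  set sgn : EuclideanSpace ℝ (Fin k) → (Fin d → Bool) := fun x i => decide (b i < ⟪w i, x⟫) with hsgn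
  have hmemcell : ∀ x, x ∈ S → x ∈ cell (sgn x) := by
    intro x hx i
    rw [hS, Set.mem_compl_iff, Set.mem_iUnion] at hx
    push_neg at hx
    have hne := hx i
    rw [Set.mem_setOf_eq] at hne
    rcases lt_or_gt_of_ne hne with h | h
    · rw [hsgn]; simp only []
      rw [if_neg (by simpa using not_lt.mpr (le_of_lt h))]
      exact h
    · rw [hsgn]; simp only []
      rw [if_pos (by simpa using h)]
      exact h
  have hsgncell : ∀ s x, x ∈ cell s → sgn x = s := by
    intro s x hx
    funext i
    have := hx i
    rw [hsgn]
    split_ifs at this with h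
    · rw [h]
      exact decide_eq_true this
    · simp only [Bool.not_eq_true] at h
      rw [h]
      exact decide_eq_false (not_lt.mpr (le_of_lt this))
  -- same cell → same component
  have hsame : ∀ s (x y : ↥S), x.val ∈ cell s → y.val ∈ cell s →
      ConnectedComponents.mk x = ConnectedComponents.mk y := by
    intro s x y hx hy
    have hpre : IsPreconnected ((Subtype.val : ↥S → EuclideanSpace ℝ (Fin k)) ⁻¹' (cell s)) := by
      apply Topology.IsInducing.subtypeVal.isPreconnected_image.mp
      rw [Subtype.image_preimage_coe, Set.inter_eq_right.mpr (hcellS s)]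
      exact (hconv s).isPreconnected
    have hxm : x ∈ (Subtype.val : ↥S → EuclideanSpace ℝ (Fin k)) ⁻¹' (cell s) := hx
    have hym : y ∈ (Subtype.val : ↥S → EuclideanSpace ℝ (Fin k)) ⁻¹' (cell s) := hy
    rw [ConnectedComponents.coe_eq_coe]
    exact connectedComponent_eq (hpre.subset_connectedComponent hxm hym)
  -- same component → same sign vector
  have hsgncomp : ∀ (x y : ↥S), ConnectedComponents.mk x = ConnectedComponents.mk y →
      sgn x.val = sgn y.val := by
    intro x y hxy
    rw [ConnectedComponents.coe_eq_coe] at hxy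
    have hypre : IsPreconnected (connectedComponent x) := isPreconnected_connectedComponent
    have hD : IsPreconnected ((Subtype.val : ↥S → EuclideanSpace ℝ (Fin k)) '' connectedComponent x) :=
      hypre.image _ continuous_subtype_val.continuousOn
    have hxD : x.val ∈ (Subtype.val : ↥S → EuclideanSpace ℝ (Fin k)) '' connectedComponent x :=
      ⟨x, mem_connectedComponent, rfl⟩
    have hyD : y.val ∈ (Subtype.val : ↥S → EuclideanSpace ℝ (Fin k)) '' connectedComponent x :=
      ⟨y, by rw [hxy]; exact mem_connectedComponent, rfl⟩
    have hDS : ((Subtype.val : ↥S → EuclideanSpace ℝ (Fin k)) '' connectedComponent x) ⊆ S := by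
      rintro z ⟨p, -, rfl⟩; exact p.2
    funext i
    by_contra hne
    have key : ∃ z ∈ (Subtype.val : ↥S → EuclideanSpace ℝ (Fin k)) '' connectedComponent x, ⟪w i, z⟫ = b i := by
      rcases Bool.eq_false_or_eq_true (sgn x.val i) with h1 | h1 <;>
        rcases Bool.eq_false_or_eq_true (sgn y.val i) with h2 | h2
      · exact absurd (h1.trans h2.symm) hne
      · -- x true, y false
        have hx1 : b i < ⟪w i, x.val⟫ := by
          have h1' := h1; rw [hsgn] at h1'; exact of_decide_eq_true h1'
        have hy1 : ¬ (b i < ⟪w i, y.val⟫) := by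
          have h2' := h2; rw [hsgn] at h2'; exact of_decide_eq_false h2'
        obtain ⟨z, hz, hz2⟩ := hD.intermediate_value₂ hyD hxD
          ((hcont i).continuousOn) (continuousOn_const (c := b i))
          (le_of_not_gt hy1) (le_of_lt hx1)
        exact ⟨z, hz, hz2⟩
      · -- x false, y true
        have hx1 : ¬ (b i < ⟪w i, x.val⟫) := by
          have h1' := h1; rw [hsgn] at h1'; exact of_decide_eq_false h1'
        have hy1 : b i < ⟪w i, y.val⟫ := by
          have h2' := h2; rw [hsgn] at h2'; exact of_decide_eq_true h2'
        obtain ⟨z, hz, hz2⟩ := hD.intermediate_value₂ hxD hyD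
          ((hcont i).continuousOn) (continuousOn_const (c := b i))
          (le_of_not_gt hx1) (le_of_lt hy1)
        exact ⟨z, hz, hz2⟩
      · exact absurd (h1.trans h2.symm) hne
    obtain ⟨z, hz, hz2⟩ := key
    have := hDS hz
    rw [hS, Set.mem_compl_iff, Set.mem_iUnion] at this
    exact this ⟨i, hz2⟩
  -- the bijection
  set F : {s : Fin d → Bool // ∃ x : EuclideanSpace ℝ (Fin k), ∀ i, if s i then b i < ⟪w i, x⟫ else ⟪w i, x⟫ < b i}
      → ConnectedComponents ↥S :=
    fun sp => ConnectedComponents.mk ⟨sp.2.choose, hcellS sp.1 sp.2.choose_spec⟩ with hF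
  have hFbij : Function.Bijective F := by
    constructor
    · rintro ⟨s1, h1⟩ ⟨s2, h2⟩ hF12
      have hs1 : sgn h1.choose = s1 := hsgncell s1 _ h1.choose_spec
      have hs2 : sgn h2.choose = s2 := hsgncell s2 _ h2.choose_spec
      have hch : sgn h1.choose = sgn h2.choose := hsgncomp _ _ hF12
      exact Subtype.ext (hs1.symm.trans (hch.trans hs2))
    · intro c
      obtain ⟨p, rfl⟩ := ConnectedComponents.surjective_coe c
      have hp : p.val ∈ cell (sgn p.val) := hmemcell p.val p.2
      refine ⟨⟨sgn p.val, ⟨p.val, hp⟩⟩, ?_⟩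
      exact hsame (sgn p.val) _ p (Exists.choose_spec (p := fun x => x ∈ cell (sgn p.val)) ⟨p.val, hp⟩) hp
  exact (Nat.card_eq_of_bijective F hFbij).symm


end Stmt1Aux


open Stmt1Aux in
/-- the maximum number of regions (connected components of the
complement) into which `dd` affine hyperplanes can partition `ℝ^k` is
`C(dd, k) = Σ_{j=0}^{k} (dd choose j)`: this is an upper bound for every
arrangement, it is attained by some arrangement, and `C(dd, k) ≤ dd^k + 1`. -/
theorem stmt_1 (k dd : ℕ) (hk : 0 < k) :
    (∀ (w : Fin dd → EuclideanSpace ℝ (Fin k)) (b : Fin dd → ℝ),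
      (∀ i, w i ≠ 0) →
      Nat.card (ConnectedComponents
        ↥((⋃ i, {x : EuclideanSpace ℝ (Fin k) | ⟪w i, x⟫ = b i})ᶜ)) ≤
        ∑ j ∈ Finset.range (k + 1), dd.choose j) ∧
    (∃ (w : Fin dd → EuclideanSpace ℝ (Fin k)) (b : Fin dd → ℝ),
      (∀ i, w i ≠ 0) ∧
      Nat.card (ConnectedComponents
        ↥((⋃ i, {x : EuclideanSpace ℝ (Fin k) | ⟪w i, x⟫ = b i})ᶜ)) =
        ∑ j ∈ Finset.range (k + 1), dd.choose j) ∧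
    (∑ j ∈ Finset.range (k + 1), dd.choose j) ≤ dd ^ k + 1 := by
  classical
  have hUB : ∀ (w : Fin dd → EuclideanSpace ℝ (Fin k)) (b : Fin dd → ℝ),
      Nat.card {s : Fin dd → Bool // ∃ x : EuclideanSpace ℝ (Fin k),
        ∀ i, if s i then b i < ⟪w i, x⟫ else ⟪w i, x⟫ < b i}
      ≤ ∑ j ∈ Finset.range (k + 1), dd.choose j := by
    intro w b
    set f : Fin dd → (EuclideanSpace ℝ (Fin k) →ᵃ[ℝ] ℝ) := fun i =>
      { toFun := fun x => ⟪w i, x⟫ - b i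
        linear := IsLinearMap.mk' _
          ⟨fun x y => inner_add_right _ _ _, fun c x => real_inner_smul_right _ _ _⟩
        map_vadd' := by
          intro p v
          simp only [vadd_eq_add, inner_add_right, IsLinearMap.mk'_apply]
          ring } with hf
    have hub := ub dd (EuclideanSpace ℝ (Fin k)) f
    rw [finrank_euclideanSpace_fin] at hub
    have hmap : ∀ s : Fin dd → Bool,
        (∃ x : EuclideanSpace ℝ (Fin k), ∀ i, if s i then b i < ⟪w i, x⟫ else ⟪w i, x⟫ < b i) →
        (∃ x : EuclideanSpace ℝ (Fin k), ∀ i, if s i then 0 < f i x else f i x < 0) := by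
      intro s hs
      obtain ⟨x, hx⟩ := hs
      refine ⟨x, fun i => ?_⟩
      have := hx i
      have happ : f i x = ⟪w i, x⟫ - b i := rfl
      split_ifs at this ⊢ <;> rw [happ] <;> linarith
    refine le_trans (Nat.card_le_card_of_injective
      (fun sp => ⟨sp.1, hmap sp.1 sp.2⟩) ?_) hub
    intro a c h
    have h2 := congrArg Subtype.val h
    exact Subtype.ext h2
  refine ⟨?_, ?_, sum_choose_le dd k hk⟩
  · intro w b _
    rw [bridge k dd w b]
    exact hUB w b
  · set w : Fin dd → EuclideanSpace ℝ (Fin k) :=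
      fun i => (WithLp.toLp 2 (fun j : Fin k => ((i:ℕ):ℝ)^(j:ℕ)) : EuclideanSpace ℝ (Fin k)) with hwdef
    set b : Fin dd → ℝ := fun i => -(((i:ℕ):ℝ)^k) with hbdef
    refine ⟨w, b, ?_, ?_⟩
    · intro i h
      have h0 := congrArg (fun v : EuclideanSpace ℝ (Fin k) => v (⟨0, hk⟩ : Fin k)) h
      rw [hwdef] at h0
      simp at h0
    · rw [bridge k dd w b]
      have hinner : ∀ (i : Fin dd) (x : EuclideanSpace ℝ (Fin k)),
          ⟪w i, x⟫ = ∑ j : Fin k, ((i:ℕ):ℝ)^(j:ℕ) * x j := by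
        intro i x
        rw [PiLp.inner_apply]
        apply Finset.sum_congr rfl
        intro j _
        rw [hwdef]
        simp [mul_comm]
      apply le_antisymm
      · exact hUB w b
      · calc ∑ j ∈ Finset.range (k+1), dd.choose j
            = Nat.card {R : Finset (Fin dd) // R.card ≤ k} := (card_small_subsets dd k).symm
          _ ≤ _ := by
              have hwit : ∀ (R : Finset (Fin dd)), R.card ≤ k →
                  (∃ x : EuclideanSpace ℝ (Fin k), ∀ i, if sgnOf dd R i then b i < ⟪w i, x⟫
                    else ⟪w i, x⟫ < b i) := by
                intro R hR
                obtain ⟨x, hx⟩ := realize k dd R hR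
                refine ⟨WithLp.toLp 2 x, fun i => ?_⟩
                have hxi := hx i
                have hsum : ⟪w i, WithLp.toLp 2 x⟫ = ∑ j : Fin k, x j * ((i:ℕ):ℝ)^(j:ℕ) := by
                  rw [hinner i (WithLp.toLp 2 x)]
                  exact Finset.sum_congr rfl (fun j _ => mul_comm _ _)
                have hb' : b i = -(((i:ℕ):ℝ)^k) := rfl
                split_ifs at hxi ⊢ <;> rw [hsum, hb'] <;> [linarith; linarith]
              refine Nat.card_le_card_of_injective
                (fun Rp => ⟨sgnOf dd Rp.1, hwit Rp.1 Rp.2⟩) ?_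
              intro a c h
              have h2 := congrArg Subtype.val h
              exact Subtype.ext (sgnOf_injective dd h2)
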